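/- Let n be an odd prime with 2 a quadratic residue modulo n, let m = ord_n(2), and let β be a primitive n-th root of unity in GF(2^m). Then for every l with 1 ≤ l ≤ n-1, the set {1, β^l, β^(2l), ..., β^((m-1)l)} is a basis of GF(2^m) over GF(2). -/

import Mathlib

/-- Let `n` be an odd prime with `2` a quadratic residue modulo `n`, let
`m = ord_n(2)`, and let `β` be a primitive `n`-th root of unity in `GF(2^m)`.
Then for every `l` with `1 ≤ l ≤ n-1`, the family `1, β^l, β^(2l), ..., β^((m-1)l)`
is a basis of `GF(2^m)` over `GF(2)`. -/
theorem powers_of_beta_l_basis (n : ℕ) (hn : n.Prime) (hodd : Odd n)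
    (h2 : IsSquare (2 : ZMod n))
    (m : ℕ) (hm : m = orderOf (2 : ZMod n))
    (β : GaloisField 2 m) (hβ : orderOf β = n)
    (l : ℕ) (hl1 : 1 ≤ l) (hln : l ≤ n - 1) :
    ∃ b : Module.Basis (Fin m) (ZMod 2) (GaloisField 2 m),
      ∀ i : Fin m, b i = β ^ (l * (i : ℕ)) := by
  haveI : Fact (Nat.Prime 2) := ⟨Nat.prime_two⟩
  haveI : Fact n.Prime := ⟨hn⟩
  have hn2 : 2 < n := lt_of_le_of_ne hn.two_le (fun h => by
    rw [← h] at hodd; exact absurd hodd (by decide))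
  have h20 : (2 : ZMod n) ≠ 0 := by
    have hnd : ¬ (n ∣ 2) := fun h => absurd (Nat.le_of_dvd two_pos h) (not_le.2 hn2)
    simpa using (ZMod.natCast_eq_zero_iff 2 n).not.mpr hnd
  have hpow : (2 : ZMod n) ^ (n - 1) = 1 := by
    have := ZMod.pow_card_sub_one_eq_one h20
    simpa using this
  have hm0 : m ≠ 0 := by
    rw [hm]
    exact (orderOf_pos_iff.mpr (isOfFinOrder_iff_pow_eq_one.mpr ⟨n - 1, by omega, hpow⟩)).ne'
  set γ : GaloisField 2 m := β ^ l with hγdef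
  have hcop : Nat.gcd n l = 1 := hn.coprime_iff_not_dvd.mpr (fun h => by
    have := Nat.le_of_dvd (by omega) h; omega)
  have hγn : orderOf γ = n := by
    rw [hγdef, orderOf_pow' β (by omega : l ≠ 0), hβ, hcop, Nat.div_one]
  have hγne : γ ≠ 0 := by
    intro h
    have h1 : γ ^ n = 1 := by rw [← hγn]; exact pow_orderOf_eq_one γ
    rw [h, zero_pow (by omega : n ≠ 0)] at h1
    exact zero_ne_one h1
  have hint : IsIntegral (ZMod 2) γ := IsIntegral.of_finite _ _
  set d := (minpoly (ZMod 2) γ).natDegree with hd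
  have hdle : d ≤ m := by
    have := minpoly.natDegree_le (A := ZMod 2) γ
    rwa [GaloisField.finrank 2 hm0] at this
  have hdpos : 0 < d := minpoly.natDegree_pos hint
  set A := Algebra.adjoin (ZMod 2) ({γ} : Set (GaloisField 2 m)) with hA
  have hmem : γ ∈ A := Algebra.self_mem_adjoin_singleton _ _
  haveI : Fintype A := Fintype.ofFinite A
  letI : Field A := (Finite.isField_of_domain A).toField
  set γ' : A := ⟨γ, hmem⟩ with hγ'
  have hcardA : Fintype.card A = 2 ^ d := by
    rw [Module.card_eq_pow_finrank (K := ZMod 2), (Algebra.adjoin.powerBasis hint).finrank,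
      Algebra.adjoin.powerBasis_dim, ZMod.card]
  have hγ'ord : orderOf γ' = n := by
    rw [← hγn]
    exact (orderOf_injective (MonoidHomClass.toMonoidHom A.val) Subtype.val_injective γ').symm
  have hγ'ne : γ' ≠ 0 := fun h => hγne (by simpa [hγ'] using congrArg Subtype.val h)
  obtain ⟨u, hu⟩ := hγ'ne.isUnit
  have hdvd : n ∣ 2 ^ d - 1 := by
    have h1 : orderOf u = n := by rw [← orderOf_units, hu, hγ'ord]
    have h2' := orderOf_dvd_natCard u
    rwa [Nat.card_units, Nat.card_eq_fintype_card, hcardA, h1] at h2'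
  have h2d1 : (2 : ZMod n) ^ d = 1 := by
    have h1 : ((2 ^ d - 1 : ℕ) : ZMod n) = 0 :=
      (ZMod.natCast_eq_zero_iff _ _).mpr hdvd
    have h2' : 1 ≤ 2 ^ d := Nat.one_le_two_pow
    rw [Nat.cast_sub h2'] at h1
    push_cast at h1
    linear_combination h1
  have hmd : m ∣ d := by rw [hm]; exact orderOf_dvd_of_pow_eq_one h2d1
  have hdm : d = m := le_antisymm hdle (Nat.le_of_dvd hdpos hmd)
  have li := linearIndependent_pow (K := ZMod 2) γ
  rw [← hd, hdm] at li
  haveI : Nonempty (Fin m) := ⟨⟨0, Nat.pos_of_ne_zero hm0⟩⟩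
  refine ⟨basisOfLinearIndependentOfCardEqFinrank li ?_, ?_⟩
  · simp [GaloisField.finrank 2 hm0]
  · intro i
    rw [coe_basisOfLinearIndependentOfCardEqFinrank]
    rw [hγdef, ← pow_mul]
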